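/- Let f = h + conj(g) be a harmonic mapping on the unit disk 𝔻 that omits at least one value in ℂ. Suppose there exists α ∈ (0,1) such that for all r ∈ (0,1) and all σ ∈ Aut(𝔻), setting Ω = σ(D(0,r)), the average of |h′| + |g′| over the boundary ∂Ω with respect to arclength satisfies (1/length(∂Ω))·∫_{∂Ω} (|h′(ζ)| + |g′(ζ)|) |dζ| ≤ r^{−α}. Then f is normal, i.e. ‖f‖_n < ∞. -/

import Mathlib

open Complex Metric Set ENNReal Filter

noncomputable section

/-- The open unit disk in the complex plane. -/
def unitDisk : Set ℂ := Metric.ball (0 : ℂ) 1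

notation "𝔻" => unitDisk

/-- The chordal distance on ℂ. -/
def chordal (z w : ℂ) : ℝ :=
  Norm.norm (z - w) /
    (Real.sqrt (1 + Norm.norm z ^ 2) * Real.sqrt (1 + Norm.norm w ^ 2))

/-- The hyperbolic distance on the unit disk. -/
def hypDist (z w : ℂ) : ℝ :=
  (1 / 2) * Real.log
    ((1 + Norm.norm ((z - w) / (1 - (starRingEnd ℂ) z * w))) /
     (1 - Norm.norm ((z - w) / (1 - (starRingEnd ℂ) z * w))))

/-- The harmonic mapping `f = h + conj g`. -/
def harmMap (h g : ℂ → ℂ) : ℂ → ℂ := fun z => h z + (starRingEnd ℂ) (g z)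

/-- The quantity `(1 - |z|²) (|h'(z)| + |g'(z)|) / (1 + |f(z)|²)` for `f = h + conj g`. -/
def nQuot (h g : ℂ → ℂ) (z : ℂ) : ℝ :=
  (1 - Norm.norm z ^ 2) * (Norm.norm (deriv h z) + Norm.norm (deriv g z)) /
    (1 + Norm.norm (harmMap h g z) ^ 2)

/-- `‖f‖ₙ`, the normality norm of the harmonic mapping `f = h + conj g`,
as an element of `[0, ∞]`. -/
def harmNorm (h g : ℂ → ℂ) : ℝ≥0∞ :=
  ⨆ z ∈ 𝔻, ENNReal.ofReal (nQuot h g z)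

/-- `φ` is a conformal automorphism of the unit disk. -/
def IsDiskAut (φ : ℂ → ℂ) : Prop :=
  DifferentiableOn ℂ φ 𝔻 ∧ Set.MapsTo φ 𝔻 𝔻 ∧
    ∃ ψ : ℂ → ℂ, DifferentiableOn ℂ ψ 𝔻 ∧ Set.MapsTo ψ 𝔻 𝔻 ∧
      (∀ z ∈ 𝔻, ψ (φ z) = z) ∧ (∀ z ∈ 𝔻, φ (ψ z) = z)

section Helpers

lemma meanValue {F : ℂ → ℂ} {c : ℂ} {t : ℝ} (ht : 0 < t)
    (hF : ContinuousOn F (closedBall c t))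
    (hd : ∀ z ∈ ball c t, DifferentiableAt ℂ F z) :
    Norm.norm (F c) ≤
      (1 / (2 * Real.pi)) * ∫ θ in (0:ℝ)..(2 * Real.pi),
        Norm.norm (F (c + t * Complex.exp (θ * Complex.I))) := by
  have key := circleIntegral_sub_center_inv_smul_of_differentiable_on_off_countable ht
    Set.countable_empty hF (fun z hz => hd z hz.1)
  rw [circleIntegral] at key
  simp only [deriv_circleMap, circleMap_sub_center, smul_eq_mul] at key
  have hne : ∀ θ : ℝ, circleMap 0 t θ ≠ 0 := by
    intro θ
    simpa using circleMap_ne_center (c := (0:ℂ)) (R := t) ht.ne' (θ := θ)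
  have key2 : Complex.I * ∫ θ in (0:ℝ)..(2 * Real.pi), F (circleMap c t θ) =
      (2 * Real.pi * Complex.I) * F c := by
    rw [← intervalIntegral.integral_const_mul, ← key]
    congr 1; ext θ; field_simp [hne θ]
  have hFc : ((2 * Real.pi : ℝ) : ℂ) * F c = ∫ θ in (0:ℝ)..(2 * Real.pi), F (circleMap c t θ) := by
    have key3 : Complex.I * ∫ θ in (0:ℝ)..(2 * Real.pi), F (circleMap c t θ) =
        Complex.I * (((2 * Real.pi : ℝ) : ℂ) * F c) := by
      rw [key2]; push_cast; ring
    exact (mul_left_cancel₀ Complex.I_ne_zero key3).symm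
  have habs : Norm.norm (((2 * Real.pi : ℝ) : ℂ) * F c) ≤
      ∫ θ in (0:ℝ)..(2 * Real.pi), Norm.norm (F (circleMap c t θ)) := by
    rw [hFc]
    simpa using intervalIntegral.norm_integral_le_integral_norm
      (f := fun θ => F (circleMap c t θ)) (a := (0:ℝ)) (b := 2 * Real.pi)
      (by positivity)
  have heq : Norm.norm (((2 * Real.pi : ℝ) : ℂ) * F c) = (2 * Real.pi) * Norm.norm (F c) := by
    rw [norm_mul, Complex.norm_real, Real.norm_eq_abs, abs_of_pos (by positivity)]
  rw [heq] at habs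
  have hpi : (0:ℝ) < 2 * Real.pi := by positivity
  have hcm : ∀ θ : ℝ, circleMap c t θ = c + t * Complex.exp (θ * Complex.I) := fun θ => rfl
  simp only [hcm] at habs
  rw [show (1/(2*Real.pi)) * (∫ θ in (0:ℝ)..(2 * Real.pi),
      Norm.norm (F (c + t * Complex.exp (θ * Complex.I)))) =
      (∫ θ in (0:ℝ)..(2 * Real.pi), Norm.norm (F (c + t * Complex.exp (θ * Complex.I))))
        / (2*Real.pi) by ring, le_div_iff₀ hpi]
  linarith

lemma den_ne {s : ℝ} (hs : |s| < 1) {w : ℂ} (hw : Norm.norm w < 1) :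
    (1 : ℂ) + s * w ≠ 0 := by
  intro h
  have h2 : (s : ℂ) * w = -1 := by linear_combination h
  have := congrArg Norm.norm h2
  rw [norm_mul, Complex.norm_real, Real.norm_eq_abs, norm_neg, norm_one] at this
  nlinarith [norm_nonneg w, abs_nonneg s]

lemma base_maps {s : ℝ} (hs : |s| < 1) {w : ℂ} (hw : Norm.norm w < 1) :
    Norm.norm ((w + s) / (1 + s * w)) < 1 := by
  have hden := den_ne hs hw
  have hdpos : 0 < Norm.norm (1 + s * w) := by
    simpa [norm_pos_iff] using hden
  rw [norm_div, div_lt_one hdpos]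
  have h1 : (Norm.norm (w + s))^2 = Complex.normSq (w + s) := (Complex.sq_norm _).symm ▸ rfl
  have key : Complex.normSq (1 + s * w) - Complex.normSq (w + s)
      = (1 - s^2) * (1 - (w.re^2 + w.im^2)) := by
    simp [Complex.normSq_apply, Complex.add_re, Complex.add_im, Complex.mul_re, Complex.mul_im,
      Complex.ofReal_re, Complex.ofReal_im]
    ring
  have hw2 : w.re^2 + w.im^2 < 1 := by
    have := Complex.sq_norm w
    rw [Complex.normSq_apply] at this
    nlinarith [norm_nonneg w]
  have hs2 : s^2 < 1 := by nlinarith [_root_.sq_abs s, abs_nonneg s]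
  have hlt : Complex.normSq (w + s) < Complex.normSq (1 + s * w) := by
    nlinarith
  have := Complex.sq_norm (w + s)
  have := Complex.sq_norm (1 + s*w)
  nlinarith [norm_nonneg (w + s), hdpos]

set_option maxHeartbeats 1000000 in
lemma mob_iff {s r : ℝ} (hs0 : 0 ≤ s) (hs1 : s < 1) (hr : 0 < r) (hr1 : r < 1)
    {w : ℂ} (hw : Norm.norm w < 1) :
    Norm.norm ((w + s) / (1 + s * w) - ((s * (1 - r^2) / (1 - r^2 * s^2) : ℝ) : ℂ))
      < r * (1 - s^2) / (1 - r^2 * s^2) ↔ Norm.norm w < r := by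
  obtain ⟨cc, hcc⟩ : ∃ cc : ℝ, cc = s * (1 - r^2) / (1 - r^2 * s^2) := ⟨_, rfl⟩
  obtain ⟨tt, htt⟩ : ∃ tt : ℝ, tt = r * (1 - s^2) / (1 - r^2 * s^2) := ⟨_, rfl⟩
  rw [← hcc, ← htt]
  have hrs : r * s < 1 := by nlinarith
  have hD : 0 < 1 - r^2 * s^2 := by nlinarith [mul_nonneg hr.le hs0, sq_nonneg (r*s)]
  have hs2 : s^2 < 1 := by nlinarith
  have httpos : 0 < tt := by
    rw [htt]; apply div_pos; nlinarith; exact hD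
  have hsabs : |s| < 1 := by rwa [_root_.abs_of_nonneg hs0]
  have hden := den_ne hsabs hw
  have hdpos : 0 < Norm.norm (1 + s * w) := by
    simpa [norm_pos_iff] using hden
  have hsplit : (w + s) / (1 + s * w) - (cc : ℂ) = (w + s - cc * (1 + s * w)) / (1 + s * w) := by
    rw [eq_div_iff hden, sub_mul, div_mul_cancel₀ _ hden]
  rw [hsplit, norm_div, div_lt_iff₀ hdpos]
  have hkey : tt^2 * Complex.normSq (1 + s * w) - Complex.normSq (w + s - cc * (1 + s * w))
      = ((1 - s^2)^2 / (1 - r^2 * s^2)) * (r^2 - (w.re^2 + w.im^2)) := by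
    simp only [Complex.normSq_apply, Complex.add_re, Complex.add_im, Complex.sub_re,
      Complex.sub_im, Complex.mul_re, Complex.mul_im, Complex.ofReal_re, Complex.ofReal_im,
      Complex.one_re, Complex.one_im]
    rw [hcc, htt]
    field_simp
    ring
  have hw2 : (Norm.norm w)^2 = w.re^2 + w.im^2 := by
    rw [Complex.sq_norm, Complex.normSq_apply]; ring
  have hnum := Complex.sq_norm (w + s - cc * (1 + s * w))
  have hden2 := Complex.sq_norm (1 + s * w)
  constructor
  · intro hlt
    have h2 : (Norm.norm (w + s - cc * (1 + s * w)))^2 < (tt * Norm.norm (1 + s * w))^2 := by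
      have := norm_nonneg (w + s - cc * (1 + s * w))
      nlinarith
    rw [mul_pow] at h2
    have hpos : 0 < ((1 - s^2)^2 / (1 - r^2 * s^2)) * (r^2 - (w.re^2 + w.im^2)) := by
      nlinarith
    have hfac : 0 < (1 - s^2)^2 / (1 - r^2 * s^2) := div_pos (by nlinarith) hD
    have : w.re^2 + w.im^2 < r^2 := by
      by_contra hcon
      push_neg at hcon
      nlinarith
    nlinarith [norm_nonneg w]
  · intro hlt
    have : w.re^2 + w.im^2 < r^2 := by nlinarith [norm_nonneg w]
    have hfac : 0 < (1 - s^2)^2 / (1 - r^2 * s^2) := div_pos (by nlinarith) hD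
    have h2 : (Norm.norm (w + s - cc * (1 + s * w)))^2 < (tt * Norm.norm (1 + s * w))^2 := by
      rw [mul_pow]
      nlinarith
    have := norm_nonneg (w + s - cc * (1 + s * w))
    nlinarith [mul_pos httpos hdpos]



lemma mem_disk_iff {z : ℂ} : z ∈ 𝔻 ↔ Norm.norm z < 1 := by
  simp [unitDisk, Metric.mem_ball, Complex.dist_eq]

lemma base_inv {s : ℝ} (hs : |s| < 1) {w : ℂ} (hw : Norm.norm w < 1) :
    ((w + s) / (1 + s * w) - s) / (1 - s * ((w + s) / (1 + s * w))) = w := by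
  have hden := den_ne hs hw
  have hs2 : s^2 < 1 := by nlinarith [_root_.sq_abs s, abs_nonneg s]
  have h1 : ((1:ℂ) - s^2) ≠ 0 := by
    intro hcon
    have : ((1 - s^2 : ℝ) : ℂ) = 0 := by push_cast; linear_combination hcon
    rw [Complex.ofReal_eq_zero] at this
    linarith
  have hb : (1:ℂ) - s * ((w + s) / (1 + s * w)) = (1 - (s:ℂ)^2) / (1 + s * w) := by
    field_simp; ring
  rw [hb]
  rw [div_eq_iff (div_ne_zero h1 hden)]
  rw [mul_div_assoc', eq_div_iff hden, sub_mul, div_mul_cancel₀ _ hden]; ring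

lemma base_diff {s : ℝ} (hs : |s| < 1) :
    DifferentiableOn ℂ (fun w => (w + (s:ℂ)) / (1 + s * w)) 𝔻 := by
  intro w hw
  have hden := den_ne hs (mem_disk_iff.1 hw)
  exact (show DifferentiableAt ℂ (fun w : ℂ => (w + (s:ℂ)) / (1 + s * w)) w by
    fun_prop (disch := exact hden)).differentiableWithinAt

lemma abs_conj_mul {u ζ : ℂ} (hu : Norm.norm u = 1) :
    Norm.norm ((starRingEnd ℂ) u * ζ) = Norm.norm ζ := by
  rw [norm_mul, Complex.norm_conj, hu, one_mul]

lemma conj_mul_self {u : ℂ} (hu : Norm.norm u = 1) : (starRingEnd ℂ) u * u = 1 := by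
  rw [mul_comm, Complex.mul_conj, Complex.normSq_eq_norm_sq, hu]
  norm_num

lemma mob_aut {s : ℝ} (hs0 : 0 ≤ s) (hs1 : s < 1) {u : ℂ} (hu : Norm.norm u = 1) :
    IsDiskAut (fun w => u * ((w + s) / (1 + s * w))) := by
  have hsabs : |s| < 1 := by rwa [_root_.abs_of_nonneg hs0]
  have hsneg : |(-s)| < 1 := by rwa [abs_neg]
  refine ⟨?_, ?_, fun ζ => ((starRingEnd ℂ) u * ζ - s) / (1 - s * ((starRingEnd ℂ) u * ζ)),
    ?_, ?_, ?_, ?_⟩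
  · exact (differentiableOn_const u).mul (base_diff hsabs)
  · intro w hw
    rw [mem_disk_iff] at hw ⊢
    rw [norm_mul, hu, one_mul]
    exact base_maps hsabs hw
  · intro ζ hζ
    have hv : Norm.norm ((starRingEnd ℂ) u * ζ) < 1 := by
      rw [abs_conj_mul hu]; exact mem_disk_iff.1 hζ
    have hden := den_ne hsneg hv
    push_cast at hden
    have hden' : (1:ℂ) - s * ((starRingEnd ℂ) u * ζ) ≠ 0 := by
      intro hcon; apply hden; linear_combination hcon
    exact (show DifferentiableAt ℂ (fun ζ : ℂ => ((starRingEnd ℂ) u * ζ - s) /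
      (1 - s * ((starRingEnd ℂ) u * ζ))) ζ by
      fun_prop (disch := exact hden')).differentiableWithinAt
  · intro ζ hζ
    rw [mem_disk_iff] at hζ ⊢
    have hv : Norm.norm ((starRingEnd ℂ) u * ζ) < 1 := by rwa [abs_conj_mul hu]
    have := base_maps hsneg hv
    push_cast at this
    have heq : ((starRingEnd ℂ) u * ζ - (s:ℂ)) / (1 - s * ((starRingEnd ℂ) u * ζ))
        = ((starRingEnd ℂ) u * ζ + -(s:ℂ)) / (1 + -(s:ℂ) * ((starRingEnd ℂ) u * ζ)) := by
      ring_nf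
    simp only [heq]
    exact this
  · intro w hw
    rw [mem_disk_iff] at hw
    have huc := conj_mul_self hu
    have hb : (starRingEnd ℂ) u * (u * ((w + s) / (1 + s * w))) = (w + s) / (1 + s * w) := by
      rw [← mul_assoc, huc, one_mul]
    simp only []
    rw [hb]
    exact base_inv hsabs hw
  · intro ζ hζ
    rw [mem_disk_iff] at hζ
    have hv : Norm.norm ((starRingEnd ℂ) u * ζ) < 1 := by rwa [abs_conj_mul hu]
    have key := base_inv hsneg hv
    push_cast at key
    simp only []
    have h1 : ((starRingEnd ℂ) u * ζ - s) / (1 - s * ((starRingEnd ℂ) u * ζ))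
        = ((starRingEnd ℂ) u * ζ + -(s:ℂ)) / (1 + -(s:ℂ) * ((starRingEnd ℂ) u * ζ)) := by
      ring_nf
    have h2 : (((starRingEnd ℂ) u * ζ + -(s:ℂ)) / (1 + -(s:ℂ) * ((starRingEnd ℂ) u * ζ)) + s) /
        (1 + s * (((starRingEnd ℂ) u * ζ + -(s:ℂ)) / (1 + -(s:ℂ) * ((starRingEnd ℂ) u * ζ))))
        = (starRingEnd ℂ) u * ζ := by
      have := key
      convert this using 2 <;> ring
    rw [h1, h2, ← mul_assoc, mul_comm u, conj_mul_self hu, one_mul]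

lemma cc_tt_lt_one {s r : ℝ} (hs0 : 0 ≤ s) (hs1 : s < 1) (hr : 0 < r) (hr1 : r < 1) :
    s * (1 - r^2) / (1 - r^2 * s^2) + r * (1 - s^2) / (1 - r^2 * s^2) < 1 := by
  have hrs : r * s < 1 := by nlinarith
  have hD : 0 < 1 - r^2 * s^2 := by nlinarith [mul_nonneg hr.le hs0, sq_nonneg (r*s)]
  rw [← add_div, div_lt_one hD]
  nlinarith [mul_pos (mul_pos (sub_pos.2 hr1) (sub_pos.2 hs1)) (sub_pos.2 hrs)]

lemma mob_image {s r : ℝ} (hs0 : 0 ≤ s) (hs1 : s < 1) (hr : 0 < r) (hr1 : r < 1)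
    {u : ℂ} (hu : Norm.norm u = 1) :
    (fun w => u * ((w + s) / (1 + s * w))) '' Metric.ball 0 r
      = Metric.ball (u * ((s * (1 - r^2) / (1 - r^2 * s^2) : ℝ) : ℂ))
          (r * (1 - s^2) / (1 - r^2 * s^2)) := by
  have hsabs : |s| < 1 := by rwa [_root_.abs_of_nonneg hs0]
  have hrs : r * s < 1 := by nlinarith
  have hD : 0 < 1 - r^2 * s^2 := by nlinarith [mul_nonneg hr.le hs0, sq_nonneg (r*s)]
  have hcc0 : 0 ≤ s * (1 - r^2) / (1 - r^2 * s^2) := by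
    apply div_nonneg _ hD.le
    have hr2 : r^2 < 1 := by nlinarith
    exact mul_nonneg hs0 (by linarith)
  have habsc : Norm.norm (u * ((s * (1 - r^2) / (1 - r^2 * s^2) : ℝ) : ℂ))
      = s * (1 - r^2) / (1 - r^2 * s^2) := by
    rw [norm_mul, hu, one_mul, Complex.norm_real, Real.norm_eq_abs, _root_.abs_of_nonneg hcc0]
  ext ζ
  simp only [Set.mem_image, Metric.mem_ball, Complex.dist_eq, sub_zero]
  constructor
  · rintro ⟨w, hw, rfl⟩
    have hw1 : Norm.norm w < 1 := lt_trans hw hr1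
    have : Norm.norm ((w + s) / (1 + s * w) - ((s * (1 - r^2) / (1 - r^2 * s^2) : ℝ) : ℂ))
        < r * (1 - s^2) / (1 - r^2 * s^2) := (mob_iff hs0 hs1 hr hr1 hw1).2 hw
    calc Norm.norm (u * ((w + s) / (1 + s * w))
          - u * ((s * (1 - r^2) / (1 - r^2 * s^2) : ℝ) : ℂ))
        = Norm.norm u * Norm.norm ((w + s) / (1 + s * w)
          - ((s * (1 - r^2) / (1 - r^2 * s^2) : ℝ) : ℂ)) := by
          rw [← norm_mul]; congr 1; ring
      _ < r * (1 - s^2) / (1 - r^2 * s^2) := by rwa [hu, one_mul]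
  · intro hζ
    have hζ1 : Norm.norm ζ < 1 := by
      have h1 := cc_tt_lt_one hs0 hs1 hr hr1
      calc Norm.norm ζ ≤ Norm.norm (u * ((s * (1 - r^2) / (1 - r^2 * s^2) : ℝ) : ℂ))
            + Norm.norm (ζ - u * ((s * (1 - r^2) / (1 - r^2 * s^2) : ℝ) : ℂ)) := by
            have := norm_add_le (u * ((s * (1 - r^2) / (1 - r^2 * s^2) : ℝ) : ℂ))
              (ζ - u * ((s * (1 - r^2) / (1 - r^2 * s^2) : ℝ) : ℂ))
            simpa using this
        _ < s * (1 - r^2) / (1 - r^2 * s^2) + r * (1 - s^2) / (1 - r^2 * s^2) := by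
            rw [habsc]; linarith
        _ < 1 := h1
    -- w := ψ ζ
    set v : ℂ := (starRingEnd ℂ) u * ζ with hv
    have hvabs : Norm.norm v < 1 := by rw [hv, abs_conj_mul hu]; exact hζ1
    have hsneg : |(-s)| < 1 := by rwa [abs_neg]
    set w : ℂ := (v - s) / (1 - s * v) with hwdef
    have hw1 : Norm.norm w < 1 := by
      have := base_maps hsneg hvabs
      push_cast at this
      have heq : w = (v + -(s:ℂ)) / (1 + -(s:ℂ) * v) := by rw [hwdef]; ring_nf
      rw [heq]; exact this
    have hσw : u * ((w + s) / (1 + s * w)) = ζ := by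
      have key := base_inv hsneg hvabs
      push_cast at key
      have h2 : (w + s) / (1 + s * w) = v := by
        rw [hwdef]
        have heq : (v - (s:ℂ)) / (1 - s * v) = (v + -(s:ℂ)) / (1 + -(s:ℂ) * v) := by ring_nf
        rw [heq]
        convert key using 2 <;> ring
      rw [h2, hv, ← mul_assoc, mul_comm u, conj_mul_self hu, one_mul]
    refine ⟨w, ?_, hσw⟩
    have hbase : Norm.norm ((w + s) / (1 + s * w)
        - ((s * (1 - r^2) / (1 - r^2 * s^2) : ℝ) : ℂ)) < r * (1 - s^2) / (1 - r^2 * s^2) := by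
      have h3 : (w + s) / (1 + s * w) = (starRingEnd ℂ) u * ζ := by
        rw [← hv]
        have h2 : (w + s) / (1 + s * w) = v := by
          rw [hwdef]
          have heq : (v - (s:ℂ)) / (1 - s * v) = (v + -(s:ℂ)) / (1 + -(s:ℂ) * v) := by ring_nf
          rw [heq]
          have key := base_inv hsneg hvabs
          push_cast at key
          convert key using 2 <;> ring
        exact h2
      rw [h3]
      calc Norm.norm ((starRingEnd ℂ) u * ζ - ((s * (1 - r^2) / (1 - r^2 * s^2) : ℝ) : ℂ))
          = Norm.norm ((starRingEnd ℂ) u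
            * (ζ - u * ((s * (1 - r^2) / (1 - r^2 * s^2) : ℝ) : ℂ))) := by
            congr 1
            linear_combination (((s * (1 - r^2) / (1 - r^2 * s^2) : ℝ) : ℂ)) * conj_mul_self hu
        _ = Norm.norm (ζ - u * ((s * (1 - r^2) / (1 - r^2 * s^2) : ℝ) : ℂ)) :=
            abs_conj_mul hu
        _ < r * (1 - s^2) / (1 - r^2 * s^2) := hζ
    exact (mob_iff hs0 hs1 hr hr1 hw1).1 hbase
end Helpers

set_option maxHeartbeats 1000000 in
theorem normal_of_integral_condition (h g : ℂ → ℂ)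
    (hh : DifferentiableOn ℂ h 𝔻) (hg : DifferentiableOn ℂ g 𝔻)
    (homit : ∃ w₀ : ℂ, ∀ z ∈ 𝔻, harmMap h g z ≠ w₀)
    (α : ℝ) (hα : α ∈ Set.Ioo (0 : ℝ) 1)
    (hint : ∀ r ∈ Set.Ioo (0 : ℝ) 1, ∀ σ : ℂ → ℂ, IsDiskAut σ →
      ∀ (c : ℂ) (t : ℝ), 0 < t → σ '' Metric.ball (0 : ℂ) r = Metric.ball c t →
        (1 / (2 * Real.pi)) * ∫ θ in (0 : ℝ)..(2 * Real.pi),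
            (Norm.norm (deriv h (c + t * Complex.exp (θ * Complex.I))) +
             Norm.norm (deriv g (c + t * Complex.exp (θ * Complex.I))))
          ≤ r ^ (-α)) :
    harmNorm h g < ⊤ := by
  obtain ⟨hα0, hα1⟩ := hα
  have hopen : IsOpen 𝔻 := isOpen_ball
  have hdh : DifferentiableOn ℂ (deriv h) 𝔻 :=
    ((hh.analyticOnNhd hopen).deriv).differentiableOn
  have hdg : DifferentiableOn ℂ (deriv g) 𝔻 :=
    ((hg.analyticOnNhd hopen).deriv).differentiableOn
  have key : ∀ z ∈ 𝔻, Norm.norm (deriv h z) + Norm.norm (deriv g z) ≤ 2 := by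
    intro z hz
    have hz1 : Norm.norm z < 1 := mem_disk_iff.1 hz
    have hr : (0:ℝ) < 1/2 := by norm_num
    have hr1 : (1/2:ℝ) < 1 := by norm_num
    obtain ⟨s, u, hs0, hs1, hu, huc⟩ : ∃ (s : ℝ) (u : ℂ), 0 ≤ s ∧ s < 1 ∧
        Norm.norm u = 1 ∧
        u * ((s * (1 - (1/2:ℝ)^2) / (1 - (1/2:ℝ)^2 * s^2) : ℝ) : ℂ) = z := by
      by_cases hz0 : z = 0
      · exact ⟨0, 1, le_refl 0, by norm_num, by simp, by simp [hz0]⟩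
      · set ρ : ℝ := Norm.norm z with hρdef
        have hρ0 : 0 < ρ := by
          rw [hρdef]; exact norm_pos_iff.2 hz0
        set q : ℝ := Real.sqrt (9 + 16 * ρ^2) with hqdef
        have hq2 : q^2 = 9 + 16 * ρ^2 := Real.sq_sqrt (by positivity)
        have hq0 : 0 ≤ q := Real.sqrt_nonneg _
        have hq3 : 3 < q := by nlinarith
        refine ⟨(q - 3)/(2*ρ), z * ((ρ:ℂ))⁻¹,
          div_nonneg (by linarith) (by positivity), ?_, ?_, ?_⟩
        · rw [div_lt_one (by positivity)]
          nlinarith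
        · rw [norm_mul, norm_inv, Complex.norm_real, Real.norm_eq_abs, _root_.abs_of_pos hρ0, ← hρdef]
          field_simp
        · have hD : (0:ℝ) < 1 - (1/2:ℝ)^2 * ((q - 3)/(2*ρ))^2 := by
            have hs1' : (q - 3)/(2*ρ) < 1 := by
              rw [div_lt_one (by positivity)]; nlinarith
            have hs0' : (0:ℝ) ≤ (q - 3)/(2*ρ) := div_nonneg (by linarith) (by positivity)
            nlinarith
          have hccρ : (q - 3)/(2*ρ) * (1 - (1/2:ℝ)^2) / (1 - (1/2:ℝ)^2 * ((q - 3)/(2*ρ))^2)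
              = ρ := by
            rw [div_eq_iff (ne_of_gt hD)]
            field_simp
            nlinarith
          rw [hccρ]
          have : ((ρ:ℝ):ℂ) ≠ 0 := by
            rw [Complex.ofReal_ne_zero]; exact ne_of_gt hρ0
          field_simp
    set r : ℝ := 1/2 with hrdef
    set cc : ℝ := s * (1 - r^2) / (1 - r^2 * s^2) with hccdef
    set t : ℝ := r * (1 - s^2) / (1 - r^2 * s^2) with htdef
    have hrs : r * s < 1 := by rw [hrdef]; nlinarith
    have hD : 0 < 1 - r^2 * s^2 := by
      nlinarith [mul_nonneg hr.le hs0, sq_nonneg (r*s)]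
    have ht : 0 < t := by
      rw [htdef]
      exact div_pos (mul_pos hr (by nlinarith)) hD
    have hcc0 : 0 ≤ cc := by
      rw [hccdef]
      exact div_nonneg (mul_nonneg hs0 (by nlinarith)) hD.le
    have hzabs : Norm.norm z = cc := by
      rw [← huc, norm_mul, hu, one_mul, Complex.norm_real, Real.norm_eq_abs, _root_.abs_of_nonneg hcc0]
    have hcct := cc_tt_lt_one hs0 hs1 hr hr1
    rw [← hccdef, ← htdef] at hcct
    have hsub : closedBall z t ⊆ 𝔻 := by
      intro ζ hζ
      rw [mem_closedBall, Complex.dist_eq] at hζ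
      rw [mem_disk_iff]
      calc Norm.norm ζ = Norm.norm (z + (ζ - z)) := by ring_nf
        _ ≤ Norm.norm z + Norm.norm (ζ - z) := norm_add_le _ _
        _ ≤ cc + t := by rw [hzabs]; linarith
        _ < 1 := hcct
    have hImage := mob_image hs0 hs1 hr hr1 hu
    rw [← hccdef, ← htdef, huc] at hImage
    have hb := hint r ⟨hr, hr1⟩ _ (mob_aut hs0 hs1 hu) z t ht hImage
    -- mean value for h and g
    have hγcont : ∀ F : ℂ → ℂ, DifferentiableOn ℂ F 𝔻 →
        Continuous fun θ : ℝ => Norm.norm (F (z + t * Complex.exp (θ * Complex.I))) := by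
      intro F hF
      have hγ : Continuous fun θ : ℝ => z + (t:ℂ) * Complex.exp ((θ:ℂ) * Complex.I) :=
        continuous_const.add (continuous_const.mul
          ((Complex.continuous_ofReal.mul continuous_const).cexp))
      rw [continuous_iff_continuousAt]
      intro θ
      apply continuous_norm.continuousAt.comp
      apply ContinuousAt.comp _ hγ.continuousAt
      apply (hF.differentiableAt (hopen.mem_nhds _)).continuousAt
      apply hsub
      rw [mem_closedBall, Complex.dist_eq]
      have : z + (t:ℂ) * Complex.exp ((θ:ℂ) * Complex.I) - z
          = (t:ℂ) * Complex.exp ((θ:ℂ) * Complex.I) := by ring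
      rw [this, norm_mul, Complex.norm_real, Real.norm_eq_abs, Complex.norm_exp_ofReal_mul_I,
        _root_.abs_of_pos ht, mul_one]
    have hIh : IntervalIntegrable
        (fun θ : ℝ => Norm.norm (deriv h (z + t * Complex.exp (θ * Complex.I))))
        MeasureTheory.volume 0 (2 * Real.pi) :=
      (hγcont _ hdh).intervalIntegrable _ _
    have hIg : IntervalIntegrable
        (fun θ : ℝ => Norm.norm (deriv g (z + t * Complex.exp (θ * Complex.I))))
        MeasureTheory.volume 0 (2 * Real.pi) :=
      (hγcont _ hdg).intervalIntegrable _ _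
    have hmh := meanValue ht (hdh.continuousOn.mono hsub)
      (fun ζ hζ => hdh.differentiableAt (hopen.mem_nhds (hsub (ball_subset_closedBall hζ))))
    have hmg := meanValue ht (hdg.continuousOn.mono hsub)
      (fun ζ hζ => hdg.differentiableAt (hopen.mem_nhds (hsub (ball_subset_closedBall hζ))))
    have hsum : Norm.norm (deriv h z) + Norm.norm (deriv g z) ≤
        (1 / (2 * Real.pi)) * ∫ θ in (0:ℝ)..(2 * Real.pi),
          (Norm.norm (deriv h (z + t * Complex.exp (θ * Complex.I))) +
           Norm.norm (deriv g (z + t * Complex.exp (θ * Complex.I)))) := by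
      rw [intervalIntegral.integral_add hIh hIg, mul_add]
      exact add_le_add hmh hmg
    have hpow : (r:ℝ) ^ (-α) ≤ 2 := by
      rw [hrdef, one_div, Real.inv_rpow (by norm_num : (0:ℝ) ≤ 2),
        ← Real.rpow_neg (by norm_num : (0:ℝ) ≤ 2), neg_neg]
      calc (2:ℝ) ^ α ≤ 2 ^ (1:ℝ) := Real.rpow_le_rpow_of_exponent_le one_le_two hα1.le
        _ = 2 := Real.rpow_one 2
    linarith
  have hq : ∀ z ∈ 𝔻, nQuot h g z ≤ 2 := by
    intro z hz
    have hz1 : Norm.norm z < 1 := mem_disk_iff.1 hz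
    have hS := key z hz
    have hS0 : 0 ≤ Norm.norm (deriv h z) + Norm.norm (deriv g z) :=
      add_nonneg (norm_nonneg _) (norm_nonneg _)
    have hz2 : 0 ≤ 1 - Norm.norm z ^ 2 := by nlinarith [norm_nonneg z]
    have hz3 : Norm.norm z ^ 2 ≤ 1 := by nlinarith [norm_nonneg z]
    have hden : 1 ≤ 1 + Norm.norm (harmMap h g z) ^ 2 := by
      nlinarith [sq_nonneg (Norm.norm (harmMap h g z))]
    unfold nQuot
    calc (1 - Norm.norm z ^ 2) * (Norm.norm (deriv h z) + Norm.norm (deriv g z)) /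
          (1 + Norm.norm (harmMap h g z) ^ 2)
        ≤ (1 - Norm.norm z ^ 2) * (Norm.norm (deriv h z) + Norm.norm (deriv g z)) :=
          div_le_self (by positivity) hden
      _ ≤ 2 := by nlinarith
  rw [harmNorm]
  have hle : (⨆ z ∈ 𝔻, ENNReal.ofReal (nQuot h g z)) ≤ ENNReal.ofReal 2 :=
    iSup₂_le fun z hz => ENNReal.ofReal_le_ofReal (hq z hz)
  exact lt_of_le_of_lt hle ENNReal.ofReal_lt_top
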